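/- arXiv:0810.4993 — 5 statements merged into one kernel-verified Lean document; each statement's English description precedes it below -/
import Mathlib

section
/- Let A and B be parity check matrices of q-ary Hamming codes of lengths n_a = (q^{m_a}-1)/(q-1) ≥ 3 and n_b = (q^{m_b}-1)/(q-1) ≥ 3. Then the distance from any vector v ∈ F_q^{n_a n_b} to the code C with parity check matrix A ⊗ B equals the rank of the syndrome matrix B V Aᵀ, where V is the n_b × n_a matrix representation of v. -/
open Matrix Kronecker

/-- `H` is a parity check matrix of a `q`-ary Hamming code: its columns are,
up to nonzero scalars, exactly all the nonzero vectors of `F_q^m`, each once. -/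
def IsHammingPCM {F : Type*} [Field F] {m n : ℕ} (H : Matrix (Fin m) (Fin n) F) : Prop :=
  ∀ v : Fin m → F, v ≠ 0 → ∃! j : Fin n, ∃ c : F, c ≠ 0 ∧ (fun i => H i j) = c • v

section Aux

variable {F : Type*} [Field F]

/-- Rank is subadditive. -/
lemma aux_rank_add_le {m n : Type*} [Fintype m] [Fintype n] (A B : Matrix m n F) :
    (A + B).rank ≤ A.rank + B.rank := by
  classical
  rw [Matrix.rank, Matrix.rank, Matrix.rank, Matrix.mulVecLin_add]
  have hr : LinearMap.range (A.mulVecLin + B.mulVecLin) ≤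
      LinearMap.range A.mulVecLin ⊔ LinearMap.range B.mulVecLin := by
    rintro x ⟨y, rfl⟩
    exact Submodule.mem_sup.2 ⟨_, ⟨y, rfl⟩, _, ⟨y, rfl⟩, rfl⟩
  exact le_trans (Submodule.finrank_mono hr)
    (Submodule.finrank_add_le_finrank_add_finrank _ _)

lemma aux_rank_sum_le {m n ι : Type*} [Fintype m] [Fintype n] (s : Finset ι)
    (f : ι → Matrix m n F) : (∑ i ∈ s, f i).rank ≤ ∑ i ∈ s, (f i).rank := by
  classical
  induction s using Finset.induction with
  | empty => simp [Matrix.rank_zero]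
  | insert _ _ h ih =>
    rw [Finset.sum_insert h, Finset.sum_insert h]
    exact le_trans (aux_rank_add_le _ _) (by omega)

lemma aux_rank_vecMulVec_le {m n : Type*} [Fintype m] [Fintype n] (w : m → F) (v : n → F) :
    (vecMulVec w v).rank ≤ 1 := by
  rw [vecMulVec_eq (Fin 1)]
  exact le_trans (Matrix.rank_mul_le_left _ _)
    (le_trans (Matrix.rank_le_card_width _) (by simp))

lemma aux_stdBasisMatrix_eq_vecMulVec {m n : Type*} [DecidableEq m] [DecidableEq n]
    (i : m) (j : n) (c : F) :
    Matrix.single i j c = vecMulVec (Pi.single i c) (Pi.single j 1) := by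
  ext i' j'
  simp only [Matrix.single, vecMulVec_apply, of_apply, Pi.single_apply]
  by_cases h1 : i = i' <;> by_cases h2 : j = j' <;> simp [h1, h2, eq_comm]

/-- rank is at most the number of nonzero entries. -/
lemma aux_rank_le_card_support {m n : Type*} [Fintype m] [Fintype n]
    [DecidableEq m] [DecidableEq n] [DecidableEq F] (M : Matrix m n F) :
    M.rank ≤ (Finset.univ.filter fun p : m × n => M p.1 p.2 ≠ 0).card := by
  classical
  have hM : M = ∑ p : m × n, Matrix.single p.1 p.2 (M p.1 p.2) := by
    rw [← Finset.univ_product_univ, Finset.sum_product]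
    exact matrix_eq_sum_single M
  calc M.rank ≤ ∑ p : m × n, (Matrix.single p.1 p.2 (M p.1 p.2)).rank := by
        conv_lhs => rw [hM]
        exact aux_rank_sum_le _ _
    _ ≤ ∑ p : m × n, (if M p.1 p.2 ≠ 0 then 1 else 0) := by
        apply Finset.sum_le_sum
        intro p _
        by_cases h : M p.1 p.2 = 0
        · simp [h, Matrix.rank_zero]
        · rw [if_pos h, aux_stdBasisMatrix_eq_vecMulVec]
          exact aux_rank_vecMulVec_le _ _
    _ = (Finset.univ.filter fun p : m × n => M p.1 p.2 ≠ 0).card := by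
        rw [Finset.card_filter]

/-- Rank factorization: a matrix of rank `r` is a sum of `r` outer products. -/
lemma aux_exists_factorization {m n : Type*} [Fintype m] [Fintype n] (S : Matrix m n F) :
    ∃ (x : Fin S.rank → m → F) (y : Fin S.rank → n → F),
      S = ∑ k, vecMulVec (x k) (y k) := by
  classical
  set W : Submodule F (m → F) := Submodule.span F (Set.range Sᵀ) with hW
  have hr : Module.finrank F W = S.rank := (Matrix.rank_eq_finrank_span_cols S).symm
  let b : Module.Basis (Fin S.rank) F W := Module.finBasisOfFinrankEq F W hr
  have hmem : ∀ j : n, Sᵀ j ∈ W := fun j => Submodule.subset_span ⟨j, rfl⟩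
  refine ⟨fun k => (b k : m → F), fun k j => b.repr ⟨Sᵀ j, hmem j⟩ k, ?_⟩
  ext i j
  have h1 := b.sum_repr ⟨Sᵀ j, hmem j⟩
  have h2 := congrArg (fun z : W => (z : m → F) i) h1
  simp only [Submodule.coe_sum, Submodule.coe_smul, Finset.sum_apply, Pi.smul_apply,
    smul_eq_mul] at h2
  rw [Matrix.sum_apply]
  simp only [vecMulVec_apply]
  rw [Matrix.transpose_apply] at h2
  rw [← h2]
  exact Finset.sum_congr rfl fun k _ => (mul_comm _ _)

lemma aux_mul_vecMulVec_mul {ma na mb nb : ℕ} (A : Matrix (Fin ma) (Fin na) F)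
    (B : Matrix (Fin mb) (Fin nb) F) (w : Fin nb → F) (z : Fin na → F) :
    B * vecMulVec w z * Aᵀ = vecMulVec (B.mulVec w) (A.mulVec z) := by
  have hrow : Matrix.replicateRow (Fin 1) (A *ᵥ z) = Matrix.replicateRow (Fin 1) z * Aᵀ := by
    ext k j
    simp [Matrix.mul_apply, Matrix.mulVec, dotProduct, mul_comm]
  rw [vecMulVec_eq (Fin 1), vecMulVec_eq (Fin 1), Matrix.replicateCol_mulVec, hrow,
    ← Matrix.mul_assoc B]
  exact Matrix.mul_assoc _ _ _

/-- Solving `H e = x` with `e` a scaled standard basis vector. -/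
lemma aux_pcm_solve {m n : ℕ} (hn : 0 < n) (H : Matrix (Fin m) (Fin n) F)
    (hH : IsHammingPCM H) (x : Fin m → F) :
    ∃ (j : Fin n) (e : F), H.mulVec (Pi.single j e) = x := by
  by_cases hx : x = 0
  · exact ⟨⟨0, hn⟩, 0, by simp [hx]⟩
  · obtain ⟨j, ⟨c, hc, hcol⟩, -⟩ := hH x hx
    refine ⟨j, c⁻¹, funext fun i => ?_⟩
    have : H i j = c * x i := by
      have := congrFun hcol i
      simpa using this
    simp [Matrix.mulVec_single, this]
    field_simp

lemma aux_kron_entry {ma na mb nb : ℕ} (A : Matrix (Fin ma) (Fin na) F)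
    (B : Matrix (Fin mb) (Fin nb) F) (c : Fin na × Fin nb → F) (i1 : Fin ma) (i2 : Fin mb) :
    ((A ⊗ₖ B).mulVec c) (i1, i2) =
      (B * (Matrix.of fun (i : Fin nb) (j : Fin na) => c (j, i)) * Aᵀ) i2 i1 := by
  simp only [Matrix.mulVec, dotProduct, Matrix.mul_apply, Matrix.transpose_apply,
    Matrix.of_apply, kroneckerMap_apply, Fintype.sum_prod_type, Finset.sum_mul, Finset.mul_sum]
  exact Finset.sum_congr rfl fun j1 _ => Finset.sum_congr rfl fun j2 _ => by ring

lemma aux_kron_code_iff {ma na mb nb : ℕ} (A : Matrix (Fin ma) (Fin na) F)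
    (B : Matrix (Fin mb) (Fin nb) F) (c : Fin na × Fin nb → F) :
    (A ⊗ₖ B).mulVec c = 0 ↔
      B * (Matrix.of fun (i : Fin nb) (j : Fin na) => c (j, i)) * Aᵀ = 0 := by
  constructor
  · intro h
    ext i2 i1
    rw [← aux_kron_entry A B c i1 i2, h]
    rfl
  · intro h
    funext p
    obtain ⟨i1, i2⟩ := p
    rw [aux_kron_entry A B c i1 i2, h]
    rfl

end Aux

/-- The distance from any vector `v ∈ F_q^{n_a n_b}` to the code `C` with
parity check matrix `A ⊗ B` (where `A`, `B` are Hamming parity check matrices)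
equals the rank of the syndrome matrix `B V Aᵀ`, where `V` is the `n_b × n_a`
matrix representation of `v`. -/
theorem kronecker_stmt_4 {F : Type*} [Field F] [Fintype F] [DecidableEq F]
    {ma na mb nb : ℕ} (hna3 : 3 ≤ na) (hnb3 : 3 ≤ nb)
    (hna : na * (Fintype.card F - 1) = Fintype.card F ^ ma - 1)
    (hnb : nb * (Fintype.card F - 1) = Fintype.card F ^ mb - 1)
    (A : Matrix (Fin ma) (Fin na) F) (B : Matrix (Fin mb) (Fin nb) F)
    (hA : IsHammingPCM A) (hB : IsHammingPCM B)
    (v : Fin na × Fin nb → F) :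
    sInf {d : ℕ | ∃ c : Fin na × Fin nb → F,
        (A ⊗ₖ B).mulVec c = 0 ∧ hammingDist v c = d} =
      (B * (Matrix.of fun (i : Fin nb) (j : Fin na) => v (j, i)) * Aᵀ).rank := by
  classical
  set toM : (Fin na × Fin nb → F) → Matrix (Fin nb) (Fin na) F :=
    fun u => Matrix.of fun i j => u (j, i) with htoM
  set S : Matrix (Fin mb) (Fin ma) F := B * toM v * Aᵀ with hS
  -- key inequality: syndrome rank ≤ hamming norm
  have key : ∀ u : Fin na × Fin nb → F, (B * toM u * Aᵀ).rank ≤ hammingNorm u := by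
    intro u
    have h1 : (B * toM u * Aᵀ).rank ≤ (toM u).rank :=
      le_trans (Matrix.rank_mul_le_left _ _) (Matrix.rank_mul_le_right _ _)
    refine le_trans h1 (le_trans (aux_rank_le_card_support (toM u)) (le_of_eq ?_))
    unfold hammingNorm
    apply Finset.card_bij (fun p _ => (p.2, p.1))
    · intro p hp
      simp only [Finset.mem_filter, Finset.mem_univ, true_and] at hp ⊢
      exact hp
    · intro p _ q _ h
      exact Prod.ext (congrArg Prod.snd h) (congrArg Prod.fst h)
    · intro p hp
      simp only [Finset.mem_filter, Finset.mem_univ, true_and] at hp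
      exact ⟨(p.2, p.1), by simp only [Finset.mem_filter, Finset.mem_univ, true_and]; exact hp, rfl⟩
  -- toM is additive/subtractive
  have htoM_sub : ∀ u w : Fin na × Fin nb → F, toM (u - w) = toM u - toM w := by
    intro u w; ext i j; rfl
  apply le_antisymm
  · -- construct a codeword at distance ≤ rank S
    obtain ⟨x, y, hxy⟩ := aux_exists_factorization S
    have hna0 : 0 < na := by omega
    have hnb0 : 0 < nb := by omega
    choose jB eB hjB using fun k => aux_pcm_solve hnb0 B hB (x k)
    choose jA eA hjA using fun k => aux_pcm_solve hna0 A hA (y k)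
    set U : Matrix (Fin nb) (Fin na) F :=
      ∑ k, vecMulVec (Pi.single (jB k) (eB k)) (Pi.single (jA k) (eA k)) with hU
    have hBUA : B * U * Aᵀ = S := by
      rw [hU, Matrix.mul_sum, Matrix.sum_mul]
      conv_rhs => rw [hxy]
      refine Finset.sum_congr rfl fun k _ => ?_
      rw [aux_mul_vecMulVec_mul, hjB, hjA]
    set u : Fin na × Fin nb → F := fun p => U p.2 p.1 with hu
    have htoMu : toM u = U := by ext i j; rfl
    have hwt : hammingNorm u ≤ S.rank := by
      unfold hammingNorm
      calc (Finset.univ.filter fun p : Fin na × Fin nb => u p ≠ 0).card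
          ≤ (Finset.univ.image fun k : Fin S.rank => (jA k, jB k)).card := by
            apply Finset.card_le_card
            intro p hp
            simp only [Finset.mem_filter, Finset.mem_univ, true_and] at hp
            have : ∃ k : Fin S.rank,
                vecMulVec (Pi.single (jB k) (eB k)) (Pi.single (jA k) (eA k)) p.2 p.1 ≠ 0 := by
              by_contra hc
              push_neg at hc
              apply hp
              rw [hu]
              simp only [hU, Matrix.sum_apply]
              exact Finset.sum_eq_zero fun k _ => hc k
            obtain ⟨k, hk⟩ := this
            simp only [vecMulVec_apply, Pi.single_apply, mul_ne_zero_iff, ne_eq,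
              ite_eq_right_iff, not_forall] at hk
            obtain ⟨⟨h1, -⟩, ⟨h2, -⟩⟩ := hk
            simp only [Finset.mem_image, Finset.mem_univ, true_and]
            exact ⟨k, by rw [← h1, ← h2]⟩
        _ ≤ (Finset.univ : Finset (Fin S.rank)).card := Finset.card_image_le
        _ = S.rank := by simp
    -- the codeword
    refine le_trans (Nat.sInf_le ⟨v - u, ?_, rfl⟩) ?_
    · rw [aux_kron_code_iff]
      show B * toM (v - u) * Aᵀ = 0
      rw [htoM_sub, Matrix.mul_sub, Matrix.sub_mul, htoMu, hBUA, sub_eq_zero]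
    · rw [hammingDist_eq_hammingNorm, show -v + (v - u) = -u by abel, show hammingNorm (-u) = hammingNorm u by simp [hammingNorm]]
      simpa using hwt
  · -- rank S ≤ every achieved distance
    apply le_csInf
    · exact ⟨hammingDist v 0, 0, by simp [Matrix.mulVec_zero], rfl⟩
    · rintro d ⟨c, hc, rfl⟩
      rw [aux_kron_code_iff] at hc
      have hc' : B * toM c * Aᵀ = 0 := hc
      have hvc : B * toM (v - c) * Aᵀ = S := by
        rw [htoM_sub, Matrix.mul_sub, Matrix.sub_mul, hc', sub_zero]
      rw [hammingDist_eq_hammingNorm, show hammingNorm (-v + c) = hammingNorm (v - c) by simp [hammingNorm, neg_add_eq_zero, sub_eq_zero]]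
      calc S.rank = (B * toM (v - c) * Aᵀ).rank := by rw [hvc]
        _ ≤ hammingNorm (v - c) := key _
end

section
/- Under the same Hamming-code hypotheses, the code C with parity check matrix A ⊗ B has length n_a n_b, dimension n_a n_b - m_a m_b, and minimum distance 3. -/
open Matrix Kronecker

section Helpers

variable {F : Type*} [Field F] [Fintype F] [DecidableEq F] {m n : ℕ}

/-- Every column of a Hamming parity check matrix is nonzero. -/
lemma ham_col_ne_zero (H : Matrix (Fin m) (Fin n) F) (hH : IsHammingPCM H)
    (hn : n * (Fintype.card F - 1) = Fintype.card F ^ m - 1) (j : Fin n) :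
    (fun i => H i j) ≠ 0 := by
  classical
  choose jf cf hc hcol using fun v : {v : Fin m → F // v ≠ 0} => (hH v.1 v.2).exists
  set e : {v : Fin m → F // v ≠ 0} → Fin n × {c : F // c ≠ 0} :=
    fun v => (jf v, ⟨cf v, hc v⟩) with he
  have hinj : Function.Injective e := by
    intro v w hvw
    have h1 : jf v = jf w := congrArg Prod.fst hvw
    have h2 : cf v = cf w := congrArg (fun z => (Prod.snd z : {c : F // c ≠ 0}).1) hvw
    have e1 : cf v • (v : Fin m → F) = cf w • (w : Fin m → F) := by
      rw [← hcol v, ← hcol w, h1]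
    rw [← h2] at e1
    exact Subtype.ext (smul_right_injective (Fin m → F) (hc v) e1)
  have hcard : Fintype.card {v : Fin m → F // v ≠ 0}
      = Fintype.card (Fin n × {c : F // c ≠ 0}) := by
    have h1 : Fintype.card {v : Fin m → F // v ≠ 0}
        = Fintype.card F ^ m - 1 := by
      have := Fintype.card_subtype_compl (fun v : Fin m → F => v = 0)
      simp only [Fintype.card_subtype_eq] at this
      simpa [Fintype.card_fun, Fintype.card_fin] using this
    have h2 : Fintype.card {c : F // c ≠ 0} = Fintype.card F - 1 := by
      have := Fintype.card_subtype_compl (fun c : F => c = 0)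
      simpa [Fintype.card_subtype_eq] using this
    rw [h1, Fintype.card_prod, Fintype.card_fin, h2, hn]
  have hbij : Function.Bijective e :=
    (Fintype.bijective_iff_injective_and_card e).2 ⟨hinj, hcard⟩
  obtain ⟨v, hv⟩ := hbij.2 (j, ⟨1, one_ne_zero⟩)
  have hj : jf v = j := congrArg Prod.fst hv
  have hc1 : cf v = 1 := congrArg (fun z => (Prod.snd z : {c : F // c ≠ 0}).1) hv
  have := hcol v
  rw [hj, hc1, one_smul] at this
  rw [this]
  exact v.2

/-- Two distinct columns of a Hamming PCM cannot be proportional. -/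
lemma ham_col_inj (H : Matrix (Fin m) (Fin n) F) (hH : IsHammingPCM H)
    (hn : n * (Fintype.card F - 1) = Fintype.card F ^ m - 1) {j j' : Fin n} {c : F}
    (hc : c ≠ 0) (h : (fun i => H i j) = c • (fun i => H i j')) : j = j' := by
  have hne := ham_col_ne_zero H hH hn j'
  obtain ⟨k, -, huniq⟩ := hH (fun i => H i j') hne
  have h1 : j = k := huniq j ⟨c, hc, h⟩
  have h2 : j' = k := huniq j' ⟨1, one_ne_zero, (one_smul F _).symm⟩
  rw [h1, h2]

/-- Two distinct columns of a Hamming PCM are linearly independent. -/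
lemma ham_dep2 (H : Matrix (Fin m) (Fin n) F) (hH : IsHammingPCM H)
    (hn : n * (Fintype.card F - 1) = Fintype.card F ^ m - 1) {j j' : Fin n} {α β : F}
    (h : ∀ i, H i j * α + H i j' * β = 0) (hjj : j ≠ j') : α = 0 ∧ β = 0 := by
  have hzero : ∀ γ : F, γ ≠ 0 → (∀ i, H i j * γ = 0) → False := by
    intro γ hγ hcol
    refine ham_col_ne_zero H hH hn j (funext fun i => ?_)
    have := hcol i
    exact (mul_eq_zero.1 this).resolve_right hγ
  have hα : α = 0 := by
    by_contra hα
    -- β ≠ 0, else column j is zero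
    have hβ : β ≠ 0 := by
      intro hβ
      exact hzero α hα fun i => by have := h i; rw [hβ, mul_zero, add_zero] at this; exact this
    -- col j = (-β/α) • col j'
    refine hjj (ham_col_inj H hH hn (c := -β * α⁻¹)
      (by simp [hβ, hα]) (funext fun i => ?_))
    have hstep : H i j * α = (-β * α⁻¹ * H i j') * α := by
      have hr : (-β * α⁻¹ * H i j') * α = -(H i j' * β) := by
        have hinv : α⁻¹ * α = 1 := inv_mul_cancel₀ hα
        calc (-β * α⁻¹ * H i j') * α = -(H i j' * β) * (α⁻¹ * α) := by ring
          _ = -(H i j' * β) := by rw [hinv, mul_one]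
      rw [hr]
      linear_combination h i
    simpa using mul_right_cancel₀ hα hstep
  refine ⟨hα, ?_⟩
  by_contra hβ
  subst hα
  refine ham_col_ne_zero H hH hn j' (funext fun i => ?_)
  have := h i
  rw [mul_zero, zero_add] at this
  exact (mul_eq_zero.1 this).resolve_right hβ

/-- Hamming PCMs have surjective `mulVecLin`. -/
lemma ham_surj (H : Matrix (Fin m) (Fin n) F) (hH : IsHammingPCM H) :
    Function.Surjective H.mulVecLin := by
  intro u
  by_cases hu : u = 0
  · exact ⟨0, by simp [hu]⟩
  obtain ⟨j, ⟨c, hc, hcol⟩, -⟩ := hH u hu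
  refine ⟨Pi.single j c⁻¹, ?_⟩
  have : H.mulVec (Pi.single j c⁻¹) = fun i => H i j * c⁻¹ := Matrix.mulVec_single H j c⁻¹
  rw [Matrix.mulVecLin_apply, this]
  funext i
  have := congrFun hcol i
  simp only [Pi.smul_apply, smul_eq_mul] at this
  rw [this]
  field_simp

lemma exists_right_inv (H : Matrix (Fin m) (Fin n) F)
    (hH : Function.Surjective H.mulVecLin) : ∃ H' : Matrix (Fin n) (Fin m) F, H * H' = 1 := by
  classical
  choose g hg using hH
  refine ⟨Matrix.of fun j i => g (Pi.single i 1) j, ?_⟩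
  ext i' i
  have := congrFun (hg (Pi.single i 1)) i'
  simp only [Matrix.mulVecLin_apply, Matrix.mulVec, dotProduct] at this
  simp only [Matrix.mul_apply, Matrix.of_apply, Matrix.one_apply]
  rw [this]
  simp [Pi.single_apply, eq_comm]

end Helpers

/-- The code `C = ker(A ⊗ B)`, with `A`, `B` Hamming parity check matrices, has
length `n_a n_b`, dimension `n_a n_b - m_a m_b` and minimum distance `3`. -/
theorem kronecker_stmt_6 {F : Type*} [Field F] [Fintype F] [DecidableEq F]
    {ma na mb nb : ℕ} (hna3 : 3 ≤ na) (hnb3 : 3 ≤ nb)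
    (hna : na * (Fintype.card F - 1) = Fintype.card F ^ ma - 1)
    (hnb : nb * (Fintype.card F - 1) = Fintype.card F ^ mb - 1)
    (A : Matrix (Fin ma) (Fin na) F) (B : Matrix (Fin mb) (Fin nb) F)
    (hA : IsHammingPCM A) (hB : IsHammingPCM B) :
    Fintype.card (Fin na × Fin nb) = na * nb ∧
    Module.finrank F (LinearMap.ker (A ⊗ₖ B).mulVecLin) = na * nb - ma * mb ∧
    IsLeast {w : ℕ | ∃ x : Fin na × Fin nb → F,
      (A ⊗ₖ B).mulVec x = 0 ∧ x ≠ 0 ∧ hammingNorm x = w} 3 := by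
  classical
  refine ⟨by simp, ?_, ?_, ?_⟩
  · -- dimension
    obtain ⟨A', hA'⟩ := exists_right_inv A (ham_surj A hA)
    obtain ⟨B', hB'⟩ := exists_right_inv B (ham_surj B hB)
    have hsurj : Function.Surjective (A ⊗ₖ B).mulVecLin := by
      intro y
      refine ⟨(A' ⊗ₖ B').mulVec y, ?_⟩
      rw [Matrix.mulVecLin_apply, Matrix.mulVec_mulVec, ← Matrix.mul_kronecker_mul, hA', hB',
        Matrix.one_kronecker_one, Matrix.one_mulVec]
    have hrange : LinearMap.range (A ⊗ₖ B).mulVecLin = ⊤ := LinearMap.range_eq_top.2 hsurj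
    have hrn := LinearMap.finrank_range_add_finrank_ker (A ⊗ₖ B).mulVecLin
    rw [hrange, finrank_top] at hrn
    simp only [Module.finrank_fintype_fun_eq_card, Fintype.card_prod, Fintype.card_fin] at hrn
    omega
  · -- 3 is in the set: construct a weight-3 codeword
    have h01 : (⟨0, by omega⟩ : Fin na) ≠ ⟨1, by omega⟩ := by simp [Fin.ext_iff]
    set i1 : Fin na := ⟨0, by omega⟩
    set i2 : Fin na := ⟨1, by omega⟩
    have hv : (fun r => A r i1) + (fun r => A r i2) ≠ 0 := by
      intro h
      have : (fun r => A r i1) = (-1 : F) • (fun r => A r i2) := by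
        funext r
        have := congrFun h r
        simp only [Pi.add_apply, Pi.zero_apply] at this
        simp only [Pi.smul_apply, smul_eq_mul]
        linear_combination this
      exact h01 (ham_col_inj A hA hna (by norm_num) this)
    obtain ⟨i3, ⟨c, hc, hcol3⟩, -⟩ := hA _ hv
    have hcol3' : ∀ r, A r i3 = c * (A r i1 + A r i2) := by
      intro r
      have := congrFun hcol3 r
      simpa using this
    have h31 : i3 ≠ i1 := by
      intro h
      have hd : ∀ r, A r i1 * (1 - c) + A r i2 * (-c) = 0 := by
        intro r
        have := hcol3' r
        rw [h] at this
        linear_combination this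
      exact hc (neg_eq_zero.1 (ham_dep2 A hA hna hd h01).2)
    have h32 : i3 ≠ i2 := by
      intro h
      have hd : ∀ r, A r i1 * (-c) + A r i2 * (1 - c) = 0 := by
        intro r
        have := hcol3' r
        rw [h] at this
        linear_combination this
      exact hc (neg_eq_zero.1 (ham_dep2 A hA hna hd h01).1)
    set j0 : Fin nb := ⟨0, by omega⟩
    set p1 : Fin na × Fin nb := (i1, j0)
    set p2 : Fin na × Fin nb := (i2, j0)
    set p3 : Fin na × Fin nb := (i3, j0)
    have hp12 : p1 ≠ p2 := fun h => h01 (congrArg Prod.fst h)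
    have hp13 : p1 ≠ p3 := fun h => h31 (congrArg Prod.fst h).symm
    have hp23 : p2 ≠ p3 := fun h => h32 (congrArg Prod.fst h).symm
    set x : Fin na × Fin nb → F :=
      Pi.single p1 c + Pi.single p2 c + Pi.single p3 (-1) with hx
    have hxval : ∀ p, x p = if p = p1 then c else if p = p2 then c else
        if p = p3 then -1 else 0 := by
      intro p
      simp only [hx, Pi.add_apply, Pi.single_apply]
      split_ifs with h1 h2 h3 <;> subst_vars <;>
        simp_all [Pi.single_apply, hp12, hp13, hp23, Ne.symm]
    refine ⟨x, ?_, ?_, ?_⟩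
    · funext ik
      obtain ⟨i, k⟩ := ik
      simp only [hx, Matrix.mulVec_add, Matrix.mulVec_single, Pi.add_apply, Pi.zero_apply,
        Pi.smul_apply, Matrix.col_apply, op_smul_eq_mul, kroneckerMap_apply]
      have := hcol3' i
      linear_combination (-(B k j0)) * this
    · intro h
      have := congrFun h p1
      rw [hxval p1] at this
      simp [hp12, hp13] at this
      exact hc this
    · show hammingNorm x = 3
      have hfilt : ({p | x p ≠ 0} : Finset (Fin na × Fin nb)) = {p1, p2, p3} := by
        ext p
        simp only [Finset.mem_filter, Finset.mem_univ, true_and, Finset.mem_insert,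
          Finset.mem_singleton]
        rw [hxval p]
        split_ifs with h1 h2 h3 <;> simp_all [hc]
      rw [hammingNorm, hfilt]
      rw [Finset.card_insert_of_notMem (by simp [hp12, hp13]),
        Finset.card_insert_of_notMem (by simp [hp23]), Finset.card_singleton]
  · -- lower bound
    rintro w ⟨x, h0, hx, rfl⟩
    by_contra hlt
    push_neg at hlt
    set s : Finset (Fin na × Fin nb) := {p | x p ≠ 0} with hs
    have hnorm : hammingNorm x = s.card := rfl
    have hcard : s.card ≤ 2 := by omega
    have hpos : 0 < s.card := Finset.card_pos.2 (by
      obtain ⟨p, hp⟩ := Function.ne_iff.1 hx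
      exact ⟨p, by
        simp only [hs, Finset.mem_filter, Finset.mem_univ, true_and]
        simpa using hp⟩)
    have hsum : ∀ i k, ∑ p ∈ s, A i p.1 * B k p.2 * x p = 0 := by
      intro i k
      have := congrFun h0 (i, k)
      simp only [Matrix.mulVec, dotProduct, Pi.zero_apply, kroneckerMap_apply] at this
      rw [← this]
      refine Finset.sum_subset (Finset.subset_univ s) ?_
      intro p _ hp
      simp only [hs, Finset.mem_filter, Finset.mem_univ, true_and, not_not] at hp
      rw [hp, mul_zero]
    have hAcol : ∀ j : Fin na, ∃ i, A i j ≠ 0 := by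
      intro j
      obtain ⟨i, hi⟩ := Function.ne_iff.1 (ham_col_ne_zero A hA hna j)
      exact ⟨i, hi⟩
    have hBcol : ∀ l : Fin nb, ∃ k, B k l ≠ 0 := by
      intro l
      obtain ⟨k, hk⟩ := Function.ne_iff.1 (ham_col_ne_zero B hB hnb l)
      exact ⟨k, hk⟩
    have hcases : s.card = 1 ∨ s.card = 2 := by omega
    rcases hcases with h | h
    · -- card = 1
      obtain ⟨p, hp⟩ := Finset.card_eq_one.1 h
      have hxp : x p ≠ 0 := by
        have : p ∈ s := hp ▸ Finset.mem_singleton_self p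
        simpa [hs] using this
      obtain ⟨i, hi⟩ := hAcol p.1
      obtain ⟨k, hk⟩ := hBcol p.2
      have := hsum i k
      rw [hp, Finset.sum_singleton] at this
      exact (mul_ne_zero (mul_ne_zero hi hk) hxp) this
    · -- card = 2
      obtain ⟨p, q, hpq, hpq2⟩ := Finset.card_eq_two.1 h
      have hxp : x p ≠ 0 := by
        have : p ∈ s := hpq2 ▸ by simp
        simpa [hs] using this
      have hxq : x q ≠ 0 := by
        have : q ∈ s := hpq2 ▸ by simp
        simpa [hs] using this
      have hsum2 : ∀ i k, A i p.1 * B k p.2 * x p + A i q.1 * B k q.2 * x q = 0 := by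
        intro i k
        have := hsum i k
        rw [hpq2, Finset.sum_pair hpq] at this
        exact this
      obtain ⟨k0, hk0⟩ := hBcol p.2
      obtain ⟨i0, hi0⟩ := hAcol p.1
      have h1 : p.1 = q.1 := by
        by_contra hne
        have hd : ∀ i, A i p.1 * (B k0 p.2 * x p) + A i q.1 * (B k0 q.2 * x q) = 0 := by
          intro i
          linear_combination hsum2 i k0
        exact mul_ne_zero hk0 hxp (ham_dep2 A hA hna hd hne).1
      have h2 : p.2 = q.2 := by
        by_contra hne
        have hd : ∀ k, B k p.2 * (A i0 p.1 * x p) + B k q.2 * (A i0 q.1 * x q) = 0 := by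
          intro k
          linear_combination hsum2 i0 k
        exact mul_ne_zero hi0 hxp (ham_dep2 B hB hnb hd hne).1
      exact hpq (Prod.ext h1 h2)
end

section
/- Let A be the (n_a - 1) × n_a parity check matrix of the q-ary repetition code (rows of the form e_i followed by entry -1 in the last column) and B a parity check matrix of the q-ary Hamming code of length n_b = (q^m - 1)/(q - 1), with 3 ≤ n_a ≤ n_b. Then the code C = ker(A ⊗ B) has covering radius exactly n_a - 1. -/
open Matrix Kronecker

set_option linter.unusedSectionVars false

section Aux
variable {F : Type*} [Field F] [Fintype F] [DecidableEq F] {m na nb : ℕ}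

/-- Each row-distinct statement. -/
lemma hammingDist_prod (v c : Fin na × Fin nb → F) :
    hammingDist v c = ∑ j : Fin na, hammingDist (fun l => v (j, l)) (fun l => c (j, l)) := by
  simp only [hammingDist]
  rw [Finset.card_filter, Fintype.sum_prod_type]
  exact Finset.sum_congr rfl fun j _ => (Finset.card_filter _ _).symm

/-- Realize any syndrome with a vector of Hamming weight at most one. -/
lemma hamming_syndrome_realize {B : Matrix (Fin m) (Fin nb) F} (hB : IsHammingPCM B)
    (s : Fin m → F) :
    ∃ e : Fin nb → F, B.mulVec e = s ∧ hammingNorm e ≤ 1 ∧ (s = 0 → e = 0) := by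
  by_cases hs : s = 0
  · exact ⟨0, by simp [hs], by simp, fun _ => rfl⟩
  · obtain ⟨j, ⟨c, hc, hcol⟩, -⟩ := hB s hs
    refine ⟨fun l => if l = j then c⁻¹ else 0, ?_, ?_, fun h => absurd h hs⟩
    · funext k
      have hBkj : B k j = c * s k := congrFun hcol k
      simp only [Matrix.mulVec, dotProduct, mul_ite, mul_zero, Finset.sum_ite_eq',
        Finset.mem_univ, if_true, hBkj]
      rw [mul_comm c (s k), mul_assoc, mul_inv_cancel₀ hc, mul_one]
    · unfold hammingNorm
      have : ({l | (if l = j then c⁻¹ else 0) ≠ 0} : Finset (Fin nb)) ⊆ {j} := by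
        intro l hl
        simp only [Finset.mem_filter, ne_eq] at hl
        rcases eq_or_ne l j with h | h
        · simp [h]
        · simp [h] at hl
      simpa using Finset.card_le_card this

/-- Codeword characterization. -/
lemma kron_mulVec_apply (hna3 : 3 ≤ na)
    (B : Matrix (Fin m) (Fin nb) F)
    (A : Matrix (Fin (na - 1)) (Fin na) F)
    (hA : ∀ (i : Fin (na - 1)) (j : Fin na),
      A i j = if (j : ℕ) = (i : ℕ) then 1
        else if (j : ℕ) = na - 1 then -1 else 0)
    (c : Fin na × Fin nb → F) (i : Fin (na - 1)) (k : Fin m) :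
    ((A ⊗ₖ B).mulVec c) (i, k)
      = B.mulVec (fun l => c (Fin.castLE (by omega) i, l)) k
        - B.mulVec (fun l => c (⟨na - 1, by omega⟩, l)) k := by
  have hiv : (i : ℕ) < na - 1 := i.isLt
  simp only [Matrix.mulVec, dotProduct, kroneckerMap_apply]
  rw [Fintype.sum_prod_type]
  have key : ∀ j : Fin na, (∑ l, A i j * B k l * c (j, l))
      = (if j = Fin.castLE (by omega) i then ∑ l, B k l * c (j, l) else 0)
        + (if j = (⟨na - 1, by omega⟩ : Fin na) then -∑ l, B k l * c (j, l) else 0) := by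
    intro j
    rw [hA i j]
    by_cases h1 : (j : ℕ) = (i : ℕ)
    · have e1 : j = Fin.castLE (by omega) i := Fin.ext (by simpa using h1)
      have e2 : j ≠ (⟨na - 1, by omega⟩ : Fin na) := by
        intro hh; rw [Fin.ext_iff] at hh; simp at hh; omega
      rw [if_pos h1, if_pos e1, if_neg e2, add_zero]
      exact Finset.sum_congr rfl fun l _ => by ring
    · have e1 : j ≠ Fin.castLE (by omega) i := by
        intro hh; rw [Fin.ext_iff] at hh; simp at hh; omega
      rw [if_neg h1, if_neg e1, zero_add]
      by_cases h2 : (j : ℕ) = na - 1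
      · have e2 : j = (⟨na - 1, by omega⟩ : Fin na) := Fin.ext (by simpa using h2)
        rw [if_pos h2, if_pos e2, ← Finset.sum_neg_distrib]
        exact Finset.sum_congr rfl fun l _ => by ring
      · have e2 : j ≠ (⟨na - 1, by omega⟩ : Fin na) := by
          intro hh; rw [Fin.ext_iff] at hh; simp at hh; omega
        rw [if_neg h2, if_neg e2]
        simp
  calc (∑ j, ∑ l, A i j * B k l * c (j, l))
      = ∑ j : Fin na, ((if j = Fin.castLE (by omega) i then ∑ l, B k l * c (j, l) else 0)
        + (if j = (⟨na - 1, by omega⟩ : Fin na) then -∑ l, B k l * c (j, l) else 0)) := by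
        exact Finset.sum_congr rfl fun j _ => key j
    _ = _ := by
        rw [Finset.sum_add_distrib, Finset.sum_ite_eq' Finset.univ, Finset.sum_ite_eq' Finset.univ]
        simp [sub_eq_add_neg]

lemma codeword_iff (hna3 : 3 ≤ na)
    (B : Matrix (Fin m) (Fin nb) F)
    (A : Matrix (Fin (na - 1)) (Fin na) F)
    (hA : ∀ (i : Fin (na - 1)) (j : Fin na),
      A i j = if (j : ℕ) = (i : ℕ) then 1
        else if (j : ℕ) = na - 1 then -1 else 0)
    (c : Fin na × Fin nb → F) :
    (A ⊗ₖ B).mulVec c = 0 ↔ ∀ j : Fin na,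
      B.mulVec (fun l => c (j, l)) = B.mulVec (fun l => c (⟨na - 1, by omega⟩, l)) := by
  constructor
  · intro h j
    by_cases hj : (j : ℕ) = na - 1
    · have : j = (⟨na - 1, by omega⟩ : Fin na) := Fin.ext (by simpa using hj)
      rw [this]
    · have hj' : (j : ℕ) < na - 1 := by have := j.isLt; omega
      funext k
      have h2 := congrFun h (⟨(j : ℕ), hj'⟩, k)
      rw [kron_mulVec_apply hna3 B A hA] at h2
      have hcast : Fin.castLE (by omega : na - 1 ≤ na) (⟨(j : ℕ), hj'⟩ : Fin (na - 1)) = j :=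
        Fin.ext rfl
      rw [hcast] at h2
      simpa [sub_eq_zero] using h2
  · intro h
    funext ik
    obtain ⟨i, k⟩ := ik
    rw [kron_mulVec_apply hna3 B A hA, Pi.zero_apply,
      congrFun (h (Fin.castLE (by omega) i)) k]
    simp

end Aux

section Aux2
variable {F : Type*} [Field F] [Fintype F] [DecidableEq F] {m na nb : ℕ}

lemma exists_close_codeword (hna3 : 3 ≤ na)
    (B : Matrix (Fin m) (Fin nb) F) (hB : IsHammingPCM B)
    (A : Matrix (Fin (na - 1)) (Fin na) F)
    (hA : ∀ (i : Fin (na - 1)) (j : Fin na),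
      A i j = if (j : ℕ) = (i : ℕ) then 1
        else if (j : ℕ) = na - 1 then -1 else 0)
    (v : Fin na × Fin nb → F) :
    ∃ c : Fin na × Fin nb → F, (A ⊗ₖ B).mulVec c = 0 ∧ hammingDist v c ≤ na - 1 := by
  set last : Fin na := ⟨na - 1, by omega⟩ with hlast
  set t : Fin m → F := B.mulVec (fun l => v (last, l)) with ht
  choose e he hn hz using fun j : Fin na =>
    hamming_syndrome_realize hB (t - B.mulVec (fun l => v (j, l)))
  have hrowsyn : ∀ j : Fin na, B.mulVec (fun l => v (j, l) + e j l) = t := by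
    intro j
    have : (fun l => v (j, l) + e j l) = (fun l => v (j, l)) + e j := rfl
    rw [this, Matrix.mulVec_add, he j]
    abel
  refine ⟨fun p => v p + e p.1 p.2, ?_, ?_⟩
  · rw [codeword_iff hna3 B A hA]
    intro j
    exact (hrowsyn j).trans (hrowsyn last).symm
  · rw [hammingDist_prod]
    have hrow : ∀ j : Fin na,
        hammingDist (fun l => v (j, l)) (fun l => v (j, l) + e j l) = hammingNorm (e j) := by
      intro j
      rw [hammingDist_eq_hammingNorm]
      congr 1
      funext l
      simp
    have hlastz : e last = 0 := hz last (by rw [ht]; abel)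
    calc (∑ j : Fin na, hammingDist (fun l => v (j, l)) (fun l => v (j, l) + e j l))
        = ∑ j : Fin na, hammingNorm (e j) := Finset.sum_congr rfl fun j _ => hrow j
      _ = ∑ j ∈ Finset.univ.erase last, hammingNorm (e j) := by
          rw [← Finset.sum_erase_add Finset.univ _ (Finset.mem_univ last), hlastz,
            hammingNorm_zero, add_zero]
      _ ≤ ∑ _j ∈ Finset.univ.erase last, 1 :=
          Finset.sum_le_sum fun j _ => hn j
      _ = na - 1 := by
          rw [Finset.sum_const, smul_eq_mul, mul_one,
            Finset.card_erase_of_mem (Finset.mem_univ last), Finset.card_univ,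
            Fintype.card_fin]

lemma exists_far_vector (hna3 : 3 ≤ na) (hnanb : na ≤ nb)
    (hnb : nb * (Fintype.card F - 1) = Fintype.card F ^ m - 1)
    (B : Matrix (Fin m) (Fin nb) F) (hB : IsHammingPCM B)
    (A : Matrix (Fin (na - 1)) (Fin na) F)
    (hA : ∀ (i : Fin (na - 1)) (j : Fin na),
      A i j = if (j : ℕ) = (i : ℕ) then 1
        else if (j : ℕ) = na - 1 then -1 else 0) :
    ∃ v : Fin na × Fin nb → F,
      ∀ c : Fin na × Fin nb → F, (A ⊗ₖ B).mulVec c = 0 → na - 1 ≤ hammingDist v c := by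
  have hq : 2 ≤ Fintype.card F := Fintype.one_lt_card
  have h1 : nb ≤ nb * (Fintype.card F - 1) := Nat.le_mul_of_pos_right nb (by omega)
  have hcard : Fintype.card (Fin na) ≤ Fintype.card (Fin m → F) := by
    rw [Fintype.card_fin, Fintype.card_fun, Fintype.card_fin]
    omega
  obtain ⟨emb⟩ := Function.Embedding.nonempty_of_card_le hcard
  choose r hr hrn hrz using fun j : Fin na => hamming_syndrome_realize hB (emb j)
  refine ⟨fun p => r p.1 p.2, fun c hc => ?_⟩
  rw [codeword_iff hna3 B A hA] at hc
  set t : Fin m → F := B.mulVec (fun l => c ((⟨na - 1, by omega⟩ : Fin na), l)) with ht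
  have key : ∀ j : Fin na, emb j ≠ t →
      1 ≤ hammingDist (fun l => r j l) (fun l => c (j, l)) := by
    intro j hj
    rw [Nat.one_le_iff_ne_zero, ne_eq, hammingDist_eq_zero]
    intro hEq
    apply hj
    have hrj : (fun l => r j l) = r j := rfl
    rw [← hr j, ← hrj, hEq]
    exact hc j
  rw [hammingDist_prod]
  have hcard1 : (Finset.univ.filter (fun j : Fin na => emb j = t)).card ≤ 1 := by
    apply Finset.card_le_one.mpr
    intro a ha b hb
    simp only [Finset.mem_filter] at ha hb
    exact emb.injective (ha.2.trans hb.2.symm)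
  have hsplit := Finset.card_filter_add_card_filter_not
    (s := (Finset.univ : Finset (Fin na))) (p := fun j => emb j = t)
  rw [Finset.card_univ, Fintype.card_fin] at hsplit
  calc na - 1 ≤ (Finset.univ.filter (fun j : Fin na => ¬ emb j = t)).card := by omega
    _ = (Finset.univ.filter (fun j : Fin na => ¬ emb j = t)).card • 1 := by simp
    _ ≤ ∑ j ∈ Finset.univ.filter (fun j : Fin na => ¬ emb j = t),
          hammingDist (fun l => r j l) (fun l => c (j, l)) :=
        Finset.card_nsmul_le_sum _ _ _ fun j hj => key j (by simpa using (Finset.mem_filter.mp hj).2)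
    _ ≤ ∑ j : Fin na, hammingDist (fun l => r j l) (fun l => c (j, l)) :=
        Finset.sum_le_sum_of_subset (Finset.filter_subset _ _)
    _ = ∑ j : Fin na, hammingDist (fun l => (fun p : Fin na × Fin nb => r p.1 p.2) (j, l))
          (fun l => c (j, l)) := rfl

end Aux2

/-- With `A = [I_{n_a-1} | -1]` the parity check matrix of the `q`-ary
repetition code of length `n_a` and `B` a Hamming parity check matrix of
length `n_b = (q^m-1)/(q-1)`, `3 ≤ n_a ≤ n_b`, the code `C = ker(A ⊗ B)` has
covering radius exactly `n_a - 1`. -/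
theorem kronecker_stmt_15 {F : Type*} [Field F] [Fintype F] [DecidableEq F]
    {m na nb : ℕ} (hm : 2 ≤ m) (hna3 : 3 ≤ na) (hnanb : na ≤ nb)
    (hnb : nb * (Fintype.card F - 1) = Fintype.card F ^ m - 1)
    (B : Matrix (Fin m) (Fin nb) F) (hB : IsHammingPCM B)
    (A : Matrix (Fin (na - 1)) (Fin na) F)
    (hA : ∀ (i : Fin (na - 1)) (j : Fin na),
      A i j = if (j : ℕ) = (i : ℕ) then 1
        else if (j : ℕ) = na - 1 then -1 else 0) :
    sSup {r : ℕ | ∃ v : Fin na × Fin nb → F,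
        sInf {d : ℕ | ∃ c : Fin na × Fin nb → F,
          (A ⊗ₖ B).mulVec c = 0 ∧ hammingDist v c = d} = r} = na - 1 := by

  have hle : ∀ v : Fin na × Fin nb → F,
      sInf {d : ℕ | ∃ c : Fin na × Fin nb → F,
        (A ⊗ₖ B).mulVec c = 0 ∧ hammingDist v c = d} ≤ na - 1 := by
    intro v
    obtain ⟨c, hc, hd⟩ := exists_close_codeword hna3 B hB A hA v
    exact le_trans (Nat.sInf_le ⟨c, hc, rfl⟩) hd
  obtain ⟨v0, hv0⟩ := exists_far_vector hna3 hnanb hnb B hB A hA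
  have hv0inf : sInf {d : ℕ | ∃ c : Fin na × Fin nb → F,
      (A ⊗ₖ B).mulVec c = 0 ∧ hammingDist v0 c = d} = na - 1 := by
    obtain ⟨c, hc, hd⟩ := exists_close_codeword hna3 B hB A hA v0
    have hdist : hammingDist v0 c = na - 1 := le_antisymm hd (hv0 c hc)
    refine le_antisymm (Nat.sInf_le ⟨c, hc, hdist⟩) (le_csInf ⟨_, c, hc, rfl⟩ ?_)
    rintro d ⟨c', hc', rfl⟩
    exact hv0 c' hc'
  apply le_antisymm
  · have hne : {r : ℕ | ∃ v : Fin na × Fin nb → F,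
        sInf {d : ℕ | ∃ c : Fin na × Fin nb → F,
          (A ⊗ₖ B).mulVec c = 0 ∧ hammingDist v c = d} = r}.Nonempty := ⟨na - 1, v0, hv0inf⟩
    apply csSup_le hne
    rintro r ⟨v, rfl⟩
    exact hle v
  · have hbdd : BddAbove {r : ℕ | ∃ v : Fin na × Fin nb → F,
        sInf {d : ℕ | ∃ c : Fin na × Fin nb → F,
          (A ⊗ₖ B).mulVec c = 0 ∧ hammingDist v c = d} = r} := by
      refine ⟨na - 1, ?_⟩
      rintro r ⟨v, rfl⟩
      exact hle v
    exact le_csSup hbdd ⟨v0, hv0inf⟩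
end

section
/- Let C be the binary code of length 28 with parity check matrix A ⊗ B, where A = [I_3 | 1] is the parity check matrix of the binary repetition code of length 4 and B is the parity check matrix of the [7,4,3] binary Hamming code. Then C is not completely regular: the vectors x₁ with ones in positions 1 and 8 and x₂ with ones in positions 1 and 9 both lie at distance 2 from C, but x₁ has exactly 4 neighbors at distance 1 from C while x₂ has exactly 2. -/
open Matrix Kronecker

-- concrete data
def kA : Matrix (Fin 3) (Fin 4) (ZMod 2) := !![1,0,0,1; 0,1,0,1; 0,0,1,1]
def kB : Matrix (Fin 3) (Fin 7) (ZMod 2) := !![1,0,0,1,0,1,1; 0,1,0,1,1,0,1; 0,0,1,0,1,1,1]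
def kx₁ : Fin 4 × Fin 7 → ZMod 2 := fun p =>
  if p = ((0 : Fin 4), (0 : Fin 7)) ∨ p = ((1 : Fin 4), (0 : Fin 7)) then 1 else 0
def kx₂ : Fin 4 × Fin 7 → ZMod 2 := fun p =>
  if p = ((0 : Fin 4), (0 : Fin 7)) ∨ p = ((1 : Fin 4), (1 : Fin 7)) then 1 else 0

section Aux

variable {ι κ : Type*} [Fintype ι] [DecidableEq ι] [Fintype κ] [DecidableEq κ]

/-- column of a matrix as a vector -/
def mcol (M : Matrix κ ι (ZMod 2)) (p : ι) : κ → ZMod 2 := fun k => M k p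

noncomputable def dd (M : Matrix κ ι (ZMod 2)) (v : ι → ZMod 2) : ℕ :=
  sInf {d : ℕ | ∃ c : ι → ZMod 2, M.mulVec c = 0 ∧ hammingDist v c = d}

lemma zmod2_ne {a b : ZMod 2} (h : a ≠ b) : b = a + 1 := by revert h; revert a b; decide

lemma self_ne_add_one (a : ZMod 2) : a ≠ a + 1 := by revert a; decide

lemma fun_add_eq_zero {a b : κ → ZMod 2} (h : a + b = 0) : a = b := by
  funext k
  have := congrFun h k
  simp only [Pi.add_apply, Pi.zero_apply] at this
  revert this
  generalize a k = u; generalize b k = v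
  revert u v; decide

lemma mulVec_single' (M : Matrix κ ι (ZMod 2)) (p : ι) :
    M.mulVec ((Pi.single p 1 : ι → ZMod 2)) = mcol M p := by
  rw [Matrix.mulVec_single]
  funext k; simp [mcol]

lemma dist_single (v : ι → ZMod 2) (p : ι) :
    hammingDist v (v + ((Pi.single p 1 : ι → ZMod 2) : ι → ZMod 2)) = 1 := by
  have h : (Finset.univ.filter fun i => v i ≠ (v + (Pi.single p 1 : ι → ZMod 2)) i) = {p} := by
    ext i
    by_cases hip : i = p
    · subst hip
      simp only [Finset.mem_filter, Finset.mem_univ, true_and, Finset.mem_singleton,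
        Pi.add_apply, Pi.single_eq_same]
      simpa using self_ne_add_one (v i)
    · simp [Pi.single_apply, hip]
  rw [hammingDist, h, Finset.card_singleton]

lemma eq_or_single {v c : ι → ZMod 2} (h : hammingDist v c ≤ 1) :
    c = v ∨ ∃ p, c = v + (Pi.single p 1 : ι → ZMod 2) := by
  rcases Nat.le_one_iff_eq_zero_or_eq_one.mp h with h0 | h1
  · exact Or.inl (hammingDist_eq_zero.mp h0).symm
  · right
    rw [hammingDist] at h1
    obtain ⟨p, hp⟩ := Finset.card_eq_one.mp h1
    refine ⟨p, funext fun i => ?_⟩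
    by_cases hip : i = p
    · subst hip
      have hmem : i ∈ Finset.univ.filter fun j => v j ≠ c j := by
        rw [hp]; exact Finset.mem_singleton_self i
      have hne : v i ≠ c i := (Finset.mem_filter.mp hmem).2
      simp [Pi.single_eq_same, zmod2_ne hne]
    · have hnm : i ∉ Finset.univ.filter fun j => v j ≠ c j := by
        rw [hp]; simpa using hip
      have heq : v i = c i := by
        by_contra hne
        exact hnm (Finset.mem_filter.mpr ⟨Finset.mem_univ _, hne⟩)
      simp [Pi.single_apply, hip, ← heq]

lemma dd_eq_two (M : Matrix κ ι (ZMod 2)) (x c : ι → ZMod 2)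
    (hc : M.mulVec c = 0) (hd : hammingDist x c = 2)
    (h0 : M.mulVec x ≠ 0) (h1 : ∀ p, M.mulVec x ≠ mcol M p) : dd M x = 2 := by
  refine le_antisymm (Nat.sInf_le ⟨c, hc, hd⟩) (le_csInf ⟨2, c, hc, hd⟩ ?_)
  rintro d ⟨e, he, rfl⟩
  by_contra hlt
  push_neg at hlt
  rcases eq_or_single (Nat.lt_succ_iff.mp hlt) with rfl | ⟨p, rfl⟩
  · exact h0 he
  · rw [Matrix.mulVec_add, mulVec_single'] at he
    exact h1 p (fun_add_eq_zero he)

lemma dd_eq_one (M : Matrix κ ι (ZMod 2)) (y : ι → ZMod 2)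
    (h0 : M.mulVec y ≠ 0) (h1 : ∃ q, M.mulVec y = mcol M q) : dd M y = 1 := by
  obtain ⟨q, hq⟩ := h1
  have hmem : (1 : ℕ) ∈ {d : ℕ | ∃ c : ι → ZMod 2, M.mulVec c = 0 ∧ hammingDist y c = d} := by
    refine ⟨y + (Pi.single q 1 : ι → ZMod 2), ?_, dist_single y q⟩
    rw [Matrix.mulVec_add, mulVec_single', hq]
    funext k
    simp only [Pi.add_apply, Pi.zero_apply]
    generalize mcol M q k = u; revert u; decide
  refine le_antisymm (Nat.sInf_le hmem) ?_
  rw [Nat.one_le_iff_ne_zero]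
  intro hz
  rcases Nat.sInf_eq_zero.mp hz with h0' | hemp
  · obtain ⟨c, hc, hdc⟩ := h0'
    exact h0 ((hammingDist_eq_zero.mp hdc) ▸ hc)
  · rw [hemp] at hmem; exact hmem

lemma single_inj : Function.Injective (fun p : ι => Pi.single p (1 : ZMod 2)) := by
  intro p q h
  by_contra hpq
  have hpp := congrFun h p
  simp only [Pi.single_eq_same, Pi.single_eq_of_ne hpq] at hpp
  exact one_ne_zero hpp

lemma nbhd_ncard (M : Matrix κ ι (ZMod 2)) (x : ι → ZMod 2) :
    {y : ι → ZMod 2 | hammingDist x y = 1 ∧ dd M y = 1}.ncard =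
      (Finset.univ.filter fun p : ι =>
        M.mulVec x + mcol M p ≠ 0 ∧ ∃ q, M.mulVec x + mcol M p = mcol M q).card := by
  have hset : {y : ι → ZMod 2 | hammingDist x y = 1 ∧ dd M y = 1} =
      (fun p => x + (Pi.single p 1 : ι → ZMod 2)) '' {p : ι |
        M.mulVec x + mcol M p ≠ 0 ∧ ∃ q, M.mulVec x + mcol M p = mcol M q} := by
    ext y
    constructor
    · rintro ⟨hdist, hd1⟩
      rcases eq_or_single (le_of_eq hdist) with rfl | ⟨p, rfl⟩
      · rw [hammingDist_self] at hdist; exact absurd hdist.symm one_ne_zero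
      · have hsy : M.mulVec (x + (Pi.single p 1 : ι → ZMod 2)) = M.mulVec x + mcol M p := by
          rw [Matrix.mulVec_add, mulVec_single']
        have hne : M.mulVec x + mcol M p ≠ 0 := by
          rw [← hsy]
          intro hz
          have : dd M (x + (Pi.single p 1 : ι → ZMod 2)) = 0 :=
            Nat.sInf_eq_zero.mpr (Or.inl ⟨x + (Pi.single p 1 : ι → ZMod 2), hz, hammingDist_self _⟩)
          rw [this] at hd1; exact one_ne_zero hd1.symm
        refine ⟨p, ⟨hne, ?_⟩, rfl⟩
        have hnemp : {d : ℕ | ∃ c : ι → ZMod 2, M.mulVec c = 0 ∧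
            hammingDist (x + (Pi.single p 1 : ι → ZMod 2)) c = d}.Nonempty := by
          by_contra hE
          rw [Set.not_nonempty_iff_eq_empty] at hE
          have : dd M (x + (Pi.single p 1 : ι → ZMod 2)) = 0 := by
            unfold dd; rw [hE, Nat.sInf_empty]
          rw [this] at hd1; exact one_ne_zero hd1.symm
        have hmem := Nat.sInf_mem hnemp
        rw [show sInf {d : ℕ | ∃ c : ι → ZMod 2, M.mulVec c = 0 ∧
            hammingDist (x + (Pi.single p 1 : ι → ZMod 2)) c = d} = dd M (x + (Pi.single p 1 : ι → ZMod 2)) from rfl,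
          hd1] at hmem
        obtain ⟨c, hc, hdc⟩ := hmem
        rcases eq_or_single (le_of_eq hdc) with rfl | ⟨q, rfl⟩
        · exact absurd (hsy ▸ hc) hne
        · rw [Matrix.mulVec_add, mulVec_single', hsy] at hc
          exact ⟨q, fun_add_eq_zero hc⟩
    · rintro ⟨p, ⟨hne, q, hq⟩, rfl⟩
      have hsy : M.mulVec (x + (Pi.single p 1 : ι → ZMod 2)) = M.mulVec x + mcol M p := by
        rw [Matrix.mulVec_add, mulVec_single']
      exact ⟨dist_single x p, dd_eq_one M _ (hsy ▸ hne) ⟨q, hsy ▸ hq⟩⟩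
  rw [hset]
  have hinj : Function.Injective (fun p : ι => x + Pi.single p (1 : ZMod 2)) := by
    intro p q h
    have : Pi.single p (1 : ZMod 2) = (Pi.single q 1 : ι → ZMod 2) := by
      have := congrFun h
      funext k
      have hk := this k
      simp only [Pi.add_apply] at hk
      exact add_left_cancel hk
    exact single_inj this
  rw [Set.ncard_image_of_injective _ hinj]
  rw [show {p : ι | M.mulVec x + mcol M p ≠ 0 ∧ ∃ q, M.mulVec x + mcol M p = mcol M q} =
      ↑(Finset.univ.filter fun p : ι =>
        M.mulVec x + mcol M p ≠ 0 ∧ ∃ q, M.mulVec x + mcol M p = mcol M q) from by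
    ext p; simp]
  rw [Set.ncard_coe_finset]

end Aux

-- concrete decide facts
lemma kd1 : hammingDist kx₁ (0 : Fin 4 × Fin 7 → ZMod 2) = 2 := by decide
lemma kd2 : hammingDist kx₂ (0 : Fin 4 × Fin 7 → ZMod 2) = 2 := by decide
lemma ks1 : (kA ⊗ₖ kB).mulVec kx₁ ≠ 0 := by decide
lemma ks2 : (kA ⊗ₖ kB).mulVec kx₂ ≠ 0 := by decide
lemma kc1 : ∀ p, (kA ⊗ₖ kB).mulVec kx₁ ≠ mcol (kA ⊗ₖ kB) p := by decide
lemma kc2 : ∀ p, (kA ⊗ₖ kB).mulVec kx₂ ≠ mcol (kA ⊗ₖ kB) p := by decide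
lemma kn1 : (Finset.univ.filter fun p : Fin 4 × Fin 7 =>
    (kA ⊗ₖ kB).mulVec kx₁ + mcol (kA ⊗ₖ kB) p ≠ 0 ∧
    ∃ q, (kA ⊗ₖ kB).mulVec kx₁ + mcol (kA ⊗ₖ kB) p = mcol (kA ⊗ₖ kB) q).card = 4 := by decide
lemma kn2 : (Finset.univ.filter fun p : Fin 4 × Fin 7 =>
    (kA ⊗ₖ kB).mulVec kx₂ + mcol (kA ⊗ₖ kB) p ≠ 0 ∧
    ∃ q, (kA ⊗ₖ kB).mulVec kx₂ + mcol (kA ⊗ₖ kB) p = mcol (kA ⊗ₖ kB) q).card = 2 := by decide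

/-- The binary `[28,19,3]` code with parity check matrix `A ⊗ B`, where
`A = [I₃ | 1]` (repetition code of length 4) and `B` is the parity check
matrix of the `[7,4,3]` Hamming code, is not completely regular: the vectors
`x₁` (ones in positions 1 and 8) and `x₂` (ones in positions 1 and 9) are both
at distance 2 from `C`, but `x₁` has exactly 4 neighbors at distance 1 from
`C` whereas `x₂` has exactly 2. -/
theorem kronecker_stmt_17 :
    let A : Matrix (Fin 3) (Fin 4) (ZMod 2) := !![1,0,0,1; 0,1,0,1; 0,0,1,1]
    let B : Matrix (Fin 3) (Fin 7) (ZMod 2) :=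
      !![1,0,0,1,0,1,1; 0,1,0,1,1,0,1; 0,0,1,0,1,1,1]
    let dC : (Fin 4 × Fin 7 → ZMod 2) → ℕ := fun v =>
      sInf {d : ℕ | ∃ c : Fin 4 × Fin 7 → ZMod 2,
        (A ⊗ₖ B).mulVec c = 0 ∧ hammingDist v c = d}
    let x₁ : Fin 4 × Fin 7 → ZMod 2 := fun p =>
      if p = ((0 : Fin 4), (0 : Fin 7)) ∨ p = ((1 : Fin 4), (0 : Fin 7)) then 1 else 0
    let x₂ : Fin 4 × Fin 7 → ZMod 2 := fun p =>
      if p = ((0 : Fin 4), (0 : Fin 7)) ∨ p = ((1 : Fin 4), (1 : Fin 7)) then 1 else 0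
    dC x₁ = 2 ∧ dC x₂ = 2 ∧
      {y : Fin 4 × Fin 7 → ZMod 2 | hammingDist x₁ y = 1 ∧ dC y = 1}.ncard = 4 ∧
      {y : Fin 4 × Fin 7 → ZMod 2 | hammingDist x₂ y = 1 ∧ dC y = 1}.ncard = 2 := by
  refine ⟨?_, ?_, ?_, ?_⟩
  · show dd (kA ⊗ₖ kB) kx₁ = 2
    exact dd_eq_two _ _ 0 (Matrix.mulVec_zero _) kd1 ks1 kc1
  · show dd (kA ⊗ₖ kB) kx₂ = 2
    exact dd_eq_two _ _ 0 (Matrix.mulVec_zero _) kd2 ks2 kc2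
  · show {y : Fin 4 × Fin 7 → ZMod 2 | hammingDist kx₁ y = 1 ∧ dd (kA ⊗ₖ kB) y = 1}.ncard = 4
    rw [nbhd_ncard]; exact kn1
  · show {y : Fin 4 × Fin 7 → ZMod 2 | hammingDist kx₂ y = 1 ∧ dd (kA ⊗ₖ kB) y = 1}.ncard = 2
    rw [nbhd_ncard]; exact kn2
end

section
/- Let A = [I_{n_a-1} | -1] (repetition code parity check matrix) and B a Hamming parity check matrix with 3 ≤ n_a ≤ n_b = (q^m-1)/(q-1). The code C = ker(A ⊗ B) has length n_a n_b, dimension n_a n_b - m(n_a - 1), and minimum distance 3. -/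
open Matrix Kronecker

section Aux

variable {F : Type*} [Field F]

lemma kron_key_formula {m na nb : ℕ} (hna3 : 3 ≤ na)
    (B : Matrix (Fin m) (Fin nb) F) (A : Matrix (Fin (na - 1)) (Fin na) F)
    (hA : ∀ (i : Fin (na - 1)) (j : Fin na),
      A i j = if (j : ℕ) = (i : ℕ) then 1
        else if (j : ℕ) = na - 1 then -1 else 0)
    (x : Fin na × Fin nb → F) (i : Fin (na - 1)) (r : Fin m) :
    ((A ⊗ₖ B).mulVec x) (i, r) =
      B.mulVec (fun s => x (⟨i.1, by omega⟩, s)) r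
        - B.mulVec (fun s => x (⟨na - 1, by omega⟩, s)) r := by
  have hilt : (i : ℕ) < na - 1 := i.2
  classical
  set i' : Fin na := ⟨i.1, by omega⟩ with hi'
  set lf : Fin na := ⟨na - 1, by omega⟩ with hlf
  have hne : i' ≠ lf := by
    intro h; rw [Fin.ext_iff] at h; simp [hi', hlf] at h; omega
  have hg : ∀ j : Fin na, B.mulVec (fun s => x (j, s)) r = ∑ s, B r s * x (j, s) := by
    intro j; simp [Matrix.mulVec, dotProduct]
  simp only [Matrix.mulVec, dotProduct, Fintype.sum_prod_type, kroneckerMap_apply]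
  have step : ∀ j : Fin na, (∑ s, A i j * B r s * x (j, s)) =
      (if j = i' then (∑ s, B r s * x (j, s)) else 0)
      - (if j = lf then (∑ s, B r s * x (j, s)) else 0) := by
    intro j
    rw [hA]
    by_cases h1 : (j : ℕ) = (i : ℕ)
    · have hji : j = i' := Fin.ext h1
      simp [h1, hji, hne, show (i' : ℕ) = i from rfl]
    · have hji : j ≠ i' := by intro h; exact h1 (by rw [h])
      by_cases h2 : (j : ℕ) = na - 1
      · have hjl : j = lf := Fin.ext h2
        have h1' : ¬ (na - 1 = (i : ℕ)) := by omega
        simp [h1, h2, hji, hjl, hne.symm, h1', neg_mul, Finset.sum_neg_distrib, show (lf : ℕ) = na - 1 from rfl]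
      · have hjl : j ≠ lf := by intro h; exact h2 (by rw [h])
        simp [h1, h2, hji, hjl]
  rw [Finset.sum_congr rfl (fun j _ => step j), Finset.sum_sub_distrib,
    Finset.sum_ite_eq', Finset.sum_ite_eq']
  simp [hg]

variable [Fintype F] [DecidableEq F]

lemma hamming_col_ne_zero {m nb : ℕ} (hnb0 : 0 < nb)
    (hnb : nb * (Fintype.card F - 1) = Fintype.card F ^ m - 1)
    (B : Matrix (Fin m) (Fin nb) F) (hB : IsHammingPCM B) :
    ∀ j : Fin nb, (fun i => B i j) ≠ 0 := by
  classical
  by_contra hcon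
  push_neg at hcon
  obtain ⟨j0, hj0⟩ := hcon
  set Q := Fintype.card F with hQ
  have hQ2 : 2 ≤ Q := Fintype.one_lt_card
  set f : (Fin m → F) → Fin nb := fun v =>
    if h : v ≠ 0 then (hB v h).exists.choose else j0 with hf
  have hfP : ∀ v : Fin m → F, v ≠ 0 →
      ∃ c : F, c ≠ 0 ∧ (fun i => B i (f v)) = c • v := by
    intro v hv
    simp only [hf, dif_pos hv]
    exact (hB v hv).exists.choose_spec
  set s : Finset (Fin m → F) := Finset.univ.filter (· ≠ 0) with hs
  have hscard : s.card = Q ^ m - 1 := by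
    have : s = Finset.univ \ {0} := by
      ext v; simp [hs]
    rw [this, Finset.card_sdiff_of_subset (by simp)]
    simp [Fintype.card_fun, hQ]
  have hfib_le : ∀ j : Fin nb, (s.filter (fun v => f v = j)).card ≤ Q - 1 := by
    intro j
    set g : (Fin m → F) → F := fun v =>
      if h : ∃ c : F, c ≠ 0 ∧ (fun i => B i (f v)) = c • v then h.choose else 0 with hg
    have hgs : ∀ v : Fin m → F, v ≠ 0 →
        g v ≠ 0 ∧ (fun i => B i (f v)) = g v • v := by
      intro v hv
      have h := hfP v hv
      simp only [hg, dif_pos h]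
      exact ⟨h.choose_spec.1, h.choose_spec.2⟩
    have : (s.filter (fun v => f v = j)).card ≤ (Finset.univ.filter (fun c : F => c ≠ 0)).card := by
      apply Finset.card_le_card_of_injOn g
      · intro v hv
        simp only [Finset.mem_coe, Finset.mem_filter, hs, Finset.mem_univ, true_and] at hv ⊢
        exact (hgs v hv.1).1
      · intro v hv w hw hgvw
        simp only [Finset.coe_filter, Set.mem_setOf_eq, Finset.mem_filter, hs,
          Finset.mem_univ, true_and] at hv hw
        obtain ⟨hv0, hvj⟩ := hv
        obtain ⟨hw0, hwj⟩ := hw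
        have h1 := (hgs v hv0).2
        have h2 := (hgs w hw0).2
        rw [hvj] at h1
        rw [hwj] at h2
        have := h1.symm.trans h2
        rw [hgvw] at this
        exact smul_right_injective _ (by rw [← hgvw]; exact (hgs v hv0).1) this
    rwa [show (Finset.univ.filter (fun c : F => c ≠ 0)).card = Q - 1 by
      have : (Finset.univ.filter (fun c : F => c ≠ 0)) = Finset.univ \ {0} := by ext c; simp
      rw [this, Finset.card_sdiff_of_subset (by simp)]; simp [hQ]] at this
  have hfib_j0 : (s.filter (fun v => f v = j0)).card = 0 := by
    rw [Finset.card_eq_zero]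
    ext v
    simp only [Finset.mem_filter, hs, Finset.mem_univ, true_and, Finset.notMem_empty,
      iff_false, not_and]
    intro hv hfv
    obtain ⟨c, hc, hcol⟩ := hfP v hv
    rw [hfv, hj0] at hcol
    have : c • v = 0 := hcol.symm
    rcases smul_eq_zero.mp this with h | h
    · exact hc h
    · exact hv h
  have hsum : s.card = ∑ j : Fin nb, (s.filter (fun v => f v = j)).card :=
    Finset.card_eq_sum_card_fiberwise (fun v _ => Finset.mem_univ _)
  have hbound : ∑ j : Fin nb, (s.filter (fun v => f v = j)).card ≤ (nb - 1) * (Q - 1) := by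
    rw [← Finset.sum_erase_add _ _ (Finset.mem_univ j0), hfib_j0, add_zero]
    calc ∑ j ∈ Finset.univ.erase j0, (s.filter (fun v => f v = j)).card
        ≤ ∑ j ∈ Finset.univ.erase j0, (Q - 1) :=
          Finset.sum_le_sum (fun j _ => hfib_le j)
      _ = (nb - 1) * (Q - 1) := by
          rw [Finset.sum_const, Finset.card_erase_of_mem (Finset.mem_univ _)]
          simp [mul_comm]
  have hle : nb * (Q - 1) ≤ (nb - 1) * (Q - 1) := by
    rw [hnb]
    rw [hscard] at hsum
    omega
  have : nb ≤ nb - 1 := Nat.le_of_mul_le_mul_right hle (by omega)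
  omega

lemma kerB_ge_three {m nb : ℕ} (B : Matrix (Fin m) (Fin nb) F) (hB : IsHammingPCM B)
    (hcols : ∀ j : Fin nb, (fun i => B i j) ≠ 0)
    (y : Fin nb → F) (hy0 : y ≠ 0) (hker : B.mulVec y = 0) :
    3 ≤ hammingNorm y := by
  classical
  obtain ⟨s, hs⟩ := Function.ne_iff.mp hy0
  simp only [Pi.zero_apply] at hs
  by_cases hex : ∃ t, t ≠ s ∧ y t ≠ 0
  · obtain ⟨t, hts, ht⟩ := hex
    by_contra hlt
    push_neg at hlt
    have hvanish : ∀ u, u ≠ s → u ≠ t → y u = 0 := by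
      intro u hus hut
      by_contra hu
      have hsub : ({u, s, t} : Finset (Fin nb)) ⊆ Finset.univ.filter (fun z => y z ≠ 0) := by
        intro z hz
        simp only [Finset.mem_insert, Finset.mem_singleton] at hz
        rcases hz with rfl | rfl | rfl <;> simp [hu, hs, ht]
      have hcard : ({u, s, t} : Finset (Fin nb)).card = 3 := by
        rw [Finset.card_insert_of_notMem (by simp [hus, hut]),
          Finset.card_insert_of_notMem (by simp [hts.symm])]
        simp
      have := Finset.card_le_card hsub
      rw [hcard] at this
      unfold hammingNorm at hlt
      omega
    have hsyn : ∀ r, B r s * y s + B r t * y t = 0 := by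
      intro r
      have h0 : B.mulVec y r = 0 := by rw [hker]; rfl
      have : B.mulVec y r = ∑ u ∈ ({s, t} : Finset (Fin nb)), B r u * y u := by
        unfold Matrix.mulVec dotProduct
        refine (Finset.sum_subset (Finset.subset_univ _) ?_).symm
        intro u _ hu
        simp only [Finset.mem_insert, Finset.mem_singleton, not_or] at hu
        rw [hvanish u hu.1 hu.2, mul_zero]
      rw [this, Finset.sum_pair hts.symm] at h0
      exact h0
    have hcol : (fun i => B i s) = (-(y t) * (y s)⁻¹) • (fun i => B i t) := by
      funext r
      have := hsyn r
      simp only [Pi.smul_apply, smul_eq_mul]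
      field_simp
      linear_combination this
    have h1 : ∃ c : F, c ≠ 0 ∧ (fun i => B i s) = c • (fun i => B i t) :=
      ⟨_, by simp [ht, hs], hcol⟩
    have h2 : ∃ c : F, c ≠ 0 ∧ (fun i => B i t) = c • (fun i => B i t) :=
      ⟨1, one_ne_zero, by simp⟩
    have hu := hB (fun i => B i t) (hcols t)
    exact hts (hu.unique h2 h1)
  · push_neg at hex
    exfalso
    apply hcols s
    funext r
    have h0 : B.mulVec y r = 0 := by rw [hker]; rfl
    have : B.mulVec y r = B r s * y s := by
      unfold Matrix.mulVec dotProduct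
      rw [Finset.sum_eq_single s]
      · intro u _ hu
        rw [hex u hu, mul_zero]
      · simp
    rw [this] at h0
    exact (mul_eq_zero.mp h0).resolve_right hs

lemma kerB_exists_three {m nb : ℕ} (hm : 2 ≤ m)
    (B : Matrix (Fin m) (Fin nb) F) (hB : IsHammingPCM B) :
    ∃ y : Fin nb → F, B.mulVec y = 0 ∧ y ≠ 0 ∧ hammingNorm y = 3 := by
  classical
  set i0 : Fin m := ⟨0, by omega⟩
  set i1 : Fin m := ⟨1, by omega⟩
  have hi01 : i0 ≠ i1 := by simp [i0, i1, Fin.ext_iff]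
  set e0 : Fin m → F := Pi.single i0 1 with he0d
  set e1 : Fin m → F := Pi.single i1 1 with he1d
  have he00 : e0 i0 = 1 := by simp [he0d]
  have he01 : e0 i1 = 0 := by simp [he0d, Pi.single_apply, hi01.symm]
  have he10 : e1 i0 = 0 := by simp [he1d, Pi.single_apply, hi01]
  have he11 : e1 i1 = 1 := by simp [he1d]
  have he0 : e0 ≠ 0 := fun h => (one_ne_zero : (1:F) ≠ 0) (by rw [← he00, h]; rfl)
  have he1 : e1 ≠ 0 := fun h => (one_ne_zero : (1:F) ≠ 0) (by rw [← he11, h]; rfl)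
  have he2 : e0 + e1 ≠ 0 := fun h => (one_ne_zero : (1:F) ≠ 0) (by
    have := congrFun h i0
    simpa [he00, he10] using this)
  obtain ⟨j1, ⟨c1, hc1, hcol1⟩, -⟩ := hB e0 he0
  obtain ⟨j2, ⟨c2, hc2, hcol2⟩, -⟩ := hB e1 he1
  obtain ⟨j3, ⟨c3, hc3, hcol3⟩, -⟩ := hB (e0 + e1) he2
  have hB1 : ∀ r, B r j1 = c1 * e0 r := fun r => congrFun hcol1 r
  have hB2 : ∀ r, B r j2 = c2 * e1 r := fun r => congrFun hcol2 r
  have hB3 : ∀ r, B r j3 = c3 * (e0 r + e1 r) := fun r => by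
    have := congrFun hcol3 r
    simpa using this
  have hj12 : j1 ≠ j2 := by
    intro h
    apply hc1
    have := (hB1 i0).symm.trans (by rw [h, hB2 i0])
    simpa [he00, he10] using this
  have hj13 : j1 ≠ j3 := by
    intro h
    apply hc3
    have := (hB1 i1).symm.trans (by rw [h, hB3 i1])
    simpa [he01, he11, eq_comm] using this
  have hj23 : j2 ≠ j3 := by
    intro h
    apply hc3
    have := (hB2 i0).symm.trans (by rw [h, hB3 i0])
    simpa [he00, he10, eq_comm] using this
  set y : Fin nb → F := fun u =>
    if u = j1 then c1⁻¹ else if u = j2 then c2⁻¹ else if u = j3 then -c3⁻¹ else 0 with hyd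
  have hy1 : y j1 = c1⁻¹ := by simp [hyd]
  have hy2 : y j2 = c2⁻¹ := by simp [hyd, hj12.symm]
  have hy3 : y j3 = -c3⁻¹ := by simp [hyd, hj13.symm, hj23.symm]
  refine ⟨y, ?_, ?_, ?_⟩
  · funext r
    have hmem : ∀ u, u ∉ ({j1, j2, j3} : Finset (Fin nb)) → y u = 0 := by
      intro u hu
      simp only [Finset.mem_insert, Finset.mem_singleton, not_or] at hu
      simp [hyd, hu.1, hu.2.1, hu.2.2]
    have : B.mulVec y r = ∑ u ∈ ({j1, j2, j3} : Finset (Fin nb)), B r u * y u := by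
      unfold Matrix.mulVec dotProduct
      refine (Finset.sum_subset (Finset.subset_univ _) ?_).symm
      intro u _ hu
      rw [hmem u hu, mul_zero]
    rw [Pi.zero_apply, this, Finset.sum_insert (by simp [hj12, hj13]),
      Finset.sum_insert (by simp [hj23]), Finset.sum_singleton,
      hy1, hy2, hy3, hB1, hB2, hB3]
    field_simp
    ring
  · intro h
    apply inv_ne_zero hc1
    rw [← hy1, h]; rfl
  · have : Finset.univ.filter (fun u => y u ≠ 0) = {j1, j2, j3} := by
      ext u
      simp only [Finset.mem_filter, Finset.mem_univ, true_and, Finset.mem_insert,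
        Finset.mem_singleton]
      constructor
      · intro h
        by_contra hc
        push_neg at hc
        exact h (by simp [hyd, hc.1, hc.2.1, hc.2.2])
      · rintro (rfl | rfl | rfl)
        · rw [hy1]; exact inv_ne_zero hc1
        · rw [hy2]; exact inv_ne_zero hc2
        · rw [hy3]; simpa using inv_ne_zero hc3
    unfold hammingNorm
    rw [this, Finset.card_insert_of_notMem (by simp [hj12, hj13]),
      Finset.card_insert_of_notMem (by simp [hj23])]
    simp

lemma hn_blocks {na nb : ℕ} (x : Fin na × Fin nb → F) :
    hammingNorm x = ∑ j : Fin na, hammingNorm (fun s => x (j, s)) := by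
  classical
  unfold hammingNorm
  rw [Finset.card_eq_sum_card_fiberwise
    (f := Prod.fst) (t := Finset.univ) (fun p _ => Finset.mem_univ _)]
  refine Finset.sum_congr rfl (fun j _ => ?_)
  refine Finset.card_bij' (fun p _ => p.2) (fun s _ => (j, s)) ?_ ?_ ?_ ?_
  · intro p hp
    simp only [Finset.mem_filter, Finset.mem_univ, true_and] at hp ⊢
    obtain ⟨p1, p2⟩ := p
    obtain ⟨h1, h2⟩ := hp
    subst h2
    exact h1
  · intro s hs
    simp only [Finset.mem_filter, Finset.mem_univ, true_and] at hs ⊢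
    exact ⟨hs, trivial⟩
  · intro p hp
    simp only [Finset.mem_filter, Finset.mem_univ, true_and] at hp
    obtain ⟨p1, p2⟩ := p
    obtain ⟨h1, h2⟩ := hp
    subst h2
    rfl
  · intro s _
    rfl

lemma B_surj {m nb : ℕ} (B : Matrix (Fin m) (Fin nb) F) (hB : IsHammingPCM B) :
    Function.Surjective B.mulVecLin := by
  rw [← LinearMap.range_eq_top]
  rw [eq_top_iff, ← (Pi.basisFun F (Fin m)).span_eq]
  refine Submodule.span_le.mpr ?_
  rintro _ ⟨i, rfl⟩
  have hne : (Pi.single i (1:F) : Fin m → F) ≠ 0 := by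
    intro h
    have := congrFun h i
    rw [Pi.single_eq_same] at this
    exact one_ne_zero this
  obtain ⟨j, ⟨c, hc, hcol⟩, -⟩ := hB _ hne
  refine ⟨Pi.single j c⁻¹, ?_⟩
  rw [Matrix.mulVecLin_apply, Matrix.mulVec_single]
  funext r
  simp only [Pi.smul_apply, op_smul_eq_mul, Matrix.col_apply]
  rw [congrFun hcol r]
  simp only [Pi.basisFun_apply, Pi.smul_apply, smul_eq_mul]
  rw [mul_comm c, mul_assoc, mul_inv_cancel₀ hc, mul_one]

lemma AB_surj {m na nb : ℕ} (hna3 : 3 ≤ na)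
    (B : Matrix (Fin m) (Fin nb) F) (hB : IsHammingPCM B)
    (A : Matrix (Fin (na - 1)) (Fin na) F)
    (hA : ∀ (i : Fin (na - 1)) (j : Fin na),
      A i j = if (j : ℕ) = (i : ℕ) then 1
        else if (j : ℕ) = na - 1 then -1 else 0) :
    Function.Surjective (A ⊗ₖ B).mulVecLin := by
  intro t
  choose u hu using fun i : Fin (na - 1) => B_surj B hB (fun r => t (i, r))
  refine ⟨fun p => if h : (p.1 : ℕ) < na - 1 then u ⟨p.1, h⟩ p.2 else 0, ?_⟩
  funext z
  obtain ⟨i, r⟩ := z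
  rw [Matrix.mulVecLin_apply, kron_key_formula hna3 B A hA]
  have h1 : (fun s => (fun p : Fin na × Fin nb =>
      if h : (p.1 : ℕ) < na - 1 then u ⟨p.1, h⟩ p.2 else 0) (⟨i.1, by omega⟩, s)) = u i := by
    funext s
    simp only []
    rw [dif_pos (show ((⟨i.1, by omega⟩ : Fin na) : ℕ) < na - 1 from i.2)]
  have h2 : (fun s => (fun p : Fin na × Fin nb =>
      if h : (p.1 : ℕ) < na - 1 then u ⟨p.1, h⟩ p.2 else 0) (⟨na - 1, by omega⟩, s))
      = (0 : Fin nb → F) := by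
    funext s
    simp only []
    rw [dif_neg (by omega)]
    rfl
  rw [h1, h2]
  simp only [Matrix.mulVec_zero, Pi.zero_apply, sub_zero]
  have := congrFun (hu i) r
  rw [Matrix.mulVecLin_apply] at this
  exact this

end Aux

/-- With `A = [I_{n_a-1} | -1]` the repetition-code parity check matrix and
`B` a Hamming parity check matrix, `3 ≤ n_a ≤ n_b = (q^m-1)/(q-1)`, the code
`C = ker(A ⊗ B)` has length `n_a n_b`, dimension `n_a n_b - m(n_a - 1)` and
minimum distance `3`. -/
theorem kronecker_stmt_18 {F : Type*} [Field F] [Fintype F] [DecidableEq F]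
    {m na nb : ℕ} (hm : 2 ≤ m) (hna3 : 3 ≤ na) (hnanb : na ≤ nb)
    (hnb : nb * (Fintype.card F - 1) = Fintype.card F ^ m - 1)
    (B : Matrix (Fin m) (Fin nb) F) (hB : IsHammingPCM B)
    (A : Matrix (Fin (na - 1)) (Fin na) F)
    (hA : ∀ (i : Fin (na - 1)) (j : Fin na),
      A i j = if (j : ℕ) = (i : ℕ) then 1
        else if (j : ℕ) = na - 1 then -1 else 0) :
    Fintype.card (Fin na × Fin nb) = na * nb ∧
    Module.finrank F (LinearMap.ker (A ⊗ₖ B).mulVecLin) = na * nb - m * (na - 1) ∧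
    IsLeast {w : ℕ | ∃ x : Fin na × Fin nb → F,
      (A ⊗ₖ B).mulVec x = 0 ∧ x ≠ 0 ∧ hammingNorm x = w} 3 := by
  classical
  refine ⟨by simp, ?_, ?_, ?_⟩
  · -- dimension
    have hsurj : Function.Surjective (A ⊗ₖ B).mulVecLin := AB_surj hna3 B hB A hA
    have hrank := LinearMap.finrank_range_add_finrank_ker (A ⊗ₖ B).mulVecLin
    rw [LinearMap.range_eq_top.mpr hsurj, finrank_top,
      Module.finrank_fintype_fun_eq_card, Module.finrank_fintype_fun_eq_card,
      Fintype.card_prod, Fintype.card_prod, Fintype.card_fin, Fintype.card_fin,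
      Fintype.card_fin, Fintype.card_fin] at hrank
    refine Nat.eq_sub_of_add_eq ?_
    rw [show m * (na - 1) = (na - 1) * m from mul_comm _ _, add_comm]
    exact hrank
  · -- membership: a word of weight 3
    obtain ⟨y, hyker, hy0, hy3⟩ := kerB_exists_three hm B hB
    set j0 : Fin na := ⟨0, by omega⟩ with hj0d
    set x : Fin na × Fin nb → F := fun p => if p.1 = j0 then y p.2 else 0 with hxd
    have hblk : ∀ j : Fin na, (fun s => x (j, s)) = if j = j0 then y else 0 := by
      intro j
      by_cases h : j = j0 <;> funext s <;> simp [hxd, h]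
    have hblkker : ∀ j : Fin na, B.mulVec (fun s => x (j, s)) = 0 := by
      intro j
      rw [hblk j]
      by_cases h : j = j0
      · rw [if_pos h, hyker]
      · rw [if_neg h, Matrix.mulVec_zero]
    refine ⟨x, ?_, ?_, ?_⟩
    · funext z
      obtain ⟨i, r⟩ := z
      rw [kron_key_formula hna3 B A hA, hblkker, hblkker]
      simp
    · intro h
      apply hy0
      funext s
      have := congrFun h (j0, s)
      simpa [hxd] using this
    · rw [hn_blocks]
      rw [Fintype.sum_eq_single j0 (fun j hj => by rw [hblk j, if_neg hj]; exact hammingNorm_zero)]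
      rw [hblk j0, if_pos rfl, hy3]
  · -- lower bound
    rintro w ⟨x, hker, hx0, rfl⟩
    have hcols := hamming_col_ne_zero (by omega) hnb B hB
    set lf : Fin na := ⟨na - 1, by omega⟩ with hlfd
    set z : Fin m → F := B.mulVec (fun s => x (lf, s)) with hzd
    have hsynd : ∀ j : Fin na, B.mulVec (fun s => x (j, s)) = z := by
      intro j
      by_cases h : (j : ℕ) < na - 1
      · funext r
        have hk := congrFun hker (⟨j.1, h⟩, r)
        rw [kron_key_formula hna3 B A hA] at hk
        simp only [Pi.zero_apply] at hk
        have hj : (⟨(⟨j.1, h⟩ : Fin (na - 1)).1, by omega⟩ : Fin na) = j := Fin.ext rfl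
        rw [hj] at hk
        exact sub_eq_zero.mp hk
      · have hj : j = lf := Fin.ext (by have := j.2; simp [hlfd]; omega)
        rw [hj]
    by_cases hz : z = 0
    · obtain ⟨⟨j, s⟩, hp⟩ := Function.ne_iff.mp hx0
      simp only [Pi.zero_apply] at hp
      have hblk : (fun s => x (j, s)) ≠ 0 := by
        intro h
        exact hp (by rw [show x (j, s) = (fun s => x (j, s)) s from rfl, h]; rfl)
      have h3 := kerB_ge_three B hB hcols _ hblk (by rw [hsynd j, hz])
      calc 3 ≤ hammingNorm (fun s => x (j, s)) := h3
        _ ≤ ∑ j' : Fin na, hammingNorm (fun s => x (j', s)) :=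
            Finset.single_le_sum (f := fun j' => hammingNorm (fun s => x (j', s)))
              (fun _ _ => Nat.zero_le _) (Finset.mem_univ j)
        _ = hammingNorm x := (hn_blocks x).symm
    · have hone : ∀ j : Fin na, 1 ≤ hammingNorm (fun s => x (j, s)) := by
        intro j
        rcases Nat.eq_zero_or_pos (hammingNorm (fun s => x (j, s))) with h | h
        · exfalso
          apply hz
          rw [← hsynd j, hammingNorm_eq_zero.mp h, Matrix.mulVec_zero]
        · exact h
      rw [hn_blocks]
      calc 3 ≤ na := hna3
        _ = ∑ _j : Fin na, 1 := by simp
        _ ≤ ∑ j : Fin na, hammingNorm (fun s => x (j, s)) :=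
            Finset.sum_le_sum (fun j _ => hone j)
end
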